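/- Let n ≥ 1, let Ω ⊆ ℝ^n be open, let q ≥ 0 and p ∈ ℝ, set l = p + q − 1, and let u ∈ C³(Ω) with u > 0 on Ω satisfy Δu + |∇u|^q u^p = 0 on Ω. On the regular set Ω_r = {x ∈ Ω : |∇u(x)| > 0} define H = |∇ln u|², L = |∇ln u|^q · u^l and Z = L/H. Define A(x) = (2/n)(1+x)² − 2x² for x ∈ ℝ and B(x,y) = (4/n)(1+x)(1+y) − 4xy − 2l for x,y ∈ ℝ. Then for every β ∈ ℝ and every function σ : Ω → ℝ, at every point of Ω_r one has the identity ΔH = A(β)H² + A(σ)L² + B(β,σ)HL + [2(β−1)H + (2σ−q)L]·⟨∇ln u, ∇ln H⟩ + 2‖T(β,σ) − (tr T(β,σ)/n)·I‖², where T(β,σ) = u^{−1}∇²u − ((1+β) + σZ)·(∇ln u) ⊗ (∇ln u) is the symmetric n×n matrix field built from the Hessian matrix ∇²u, I is the identity matrix, tr denotes the trace, and ‖·‖ the Frobenius norm. -/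

import Mathlib

open scoped BigOperators RealInnerProductSpace

/-- The Euclidean Laplacian of `u : ℝⁿ → ℝ`, defined as the sum of the second
partial derivatives in the coordinate directions. -/
noncomputable def elaplacian {n : ℕ} (u : EuclideanSpace ℝ (Fin n) → ℝ)
    (x : EuclideanSpace ℝ (Fin n)) : ℝ :=
  ∑ i : Fin n, fderiv ℝ (fun y => fderiv ℝ u y (EuclideanSpace.single i 1)) x
    (EuclideanSpace.single i 1)

/-- The Hessian matrix of `u : ℝⁿ → ℝ` at `x`, with entries the second partial
derivatives in the coordinate directions. -/
noncomputable def ehessian {n : ℕ} (u : EuclideanSpace ℝ (Fin n) → ℝ)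
    (x : EuclideanSpace ℝ (Fin n)) (i j : Fin n) : ℝ :=
  fderiv ℝ (fun y => fderiv ℝ u y (EuclideanSpace.single j 1)) x (EuclideanSpace.single i 1)

namespace FI

variable {n : ℕ}

noncomputable def pd (g : EuclideanSpace ℝ (Fin n) → ℝ) (i : Fin n)
    (y : EuclideanSpace ℝ (Fin n)) : ℝ := fderiv ℝ g y (EuclideanSpace.single i 1)

lemma grad_coord (g : EuclideanSpace ℝ (Fin n) → ℝ) (x : EuclideanSpace ℝ (Fin n)) (i : Fin n) :
    gradient g x i = pd g i x := by
  have h1 : ⟪gradient g x, EuclideanSpace.single i (1:ℝ)⟫ = pd g i x := by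
    rw [gradient, pd]; exact InnerProductSpace.toDual_symm_apply
  have h2 : ⟪gradient g x, EuclideanSpace.single i (1:ℝ)⟫ = gradient g x i := by
    rw [EuclideanSpace.inner_single_right]; simp
  rw [← h2, h1]

lemma norm_sq_coord (v : EuclideanSpace ℝ (Fin n)) : ‖v‖ ^ 2 = ∑ i : Fin n, (v i) ^ 2 := by
  rw [EuclideanSpace.norm_sq_eq]
  simp [sq_abs]

lemma pd_congr {g₁ g₂ : EuclideanSpace ℝ (Fin n) → ℝ} {s : Set (EuclideanSpace ℝ (Fin n))}
    (hs : IsOpen s) {x : EuclideanSpace ℝ (Fin n)} (hx : x ∈ s)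
    (h : ∀ y ∈ s, g₁ y = g₂ y) (i : Fin n) : pd g₁ i x = pd g₂ i x := by
  unfold pd
  rw [(Filter.eventuallyEq_of_mem (hs.mem_nhds hx) h).fderiv_eq]

lemma pd_contDiffAt {g : EuclideanSpace ℝ (Fin n) → ℝ} {x : EuclideanSpace ℝ (Fin n)}
    {m n' : WithTop ℕ∞} (hg : ContDiffAt ℝ n' g x) (hmn : m + 1 ≤ n') (i : Fin n) :
    ContDiffAt ℝ m (pd g i) x :=
  (hg.fderiv_right hmn).clm_apply contDiffAt_const

lemma pd_sum {ι : Type*} (s : Finset ι) (g : ι → EuclideanSpace ℝ (Fin n) → ℝ)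
    {x : EuclideanSpace ℝ (Fin n)} (hg : ∀ j ∈ s, DifferentiableAt ℝ (g j) x) (i : Fin n) :
    pd (fun y => ∑ j ∈ s, g j y) i x = ∑ j ∈ s, pd (g j) i x := by
  unfold pd; rw [fderiv_fun_sum hg]; simp

lemma pd_mul {g₁ g₂ : EuclideanSpace ℝ (Fin n) → ℝ} {x : EuclideanSpace ℝ (Fin n)}
    (h₁ : DifferentiableAt ℝ g₁ x) (h₂ : DifferentiableAt ℝ g₂ x) (i : Fin n) :
    pd (fun y => g₁ y * g₂ y) i x = g₁ x * pd g₂ i x + g₂ x * pd g₁ i x := by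
  unfold pd; rw [fderiv_fun_mul h₁ h₂]; simp

lemma pd_const_mul (c : ℝ) {g : EuclideanSpace ℝ (Fin n) → ℝ} {x : EuclideanSpace ℝ (Fin n)}
    (h : DifferentiableAt ℝ g x) (i : Fin n) :
    pd (fun y => c * g y) i x = c * pd g i x := by
  unfold pd; rw [fderiv_const_mul h]; simp

lemma pd_inv {g : EuclideanSpace ℝ (Fin n) → ℝ} {x : EuclideanSpace ℝ (Fin n)}
    (h : DifferentiableAt ℝ g x) (hgx : g x ≠ 0) (i : Fin n) :
    pd (fun y => (g y)⁻¹) i x = -((g x) ^ 2)⁻¹ * pd g i x := by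
  unfold pd
  have : HasFDerivAt (fun y => (g y)⁻¹) ((-((g x) ^ 2)⁻¹) • fderiv ℝ g x) x := by
    have := (hasDerivAt_inv hgx).comp_hasFDerivAt x h.hasFDerivAt
    exact this
  rw [this.fderiv]; simp

lemma pd_rpow_const {g : EuclideanSpace ℝ (Fin n) → ℝ} {x : EuclideanSpace ℝ (Fin n)}
    (h : DifferentiableAt ℝ g x) (hgx : g x ≠ 0) (c : ℝ) (i : Fin n) :
    pd (fun y => g y ^ c) i x = c * g x ^ (c - 1) * pd g i x := by
  unfold pd; rw [(h.hasFDerivAt.rpow_const (Or.inl hgx)).fderiv]; simp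

lemma pd_sq {g : EuclideanSpace ℝ (Fin n) → ℝ} {x : EuclideanSpace ℝ (Fin n)}
    (h : DifferentiableAt ℝ g x) (i : Fin n) :
    pd (fun y => g y ^ 2) i x = 2 * g x * pd g i x := by
  have : (fun y => g y ^ 2) = fun y => g y * g y := by funext y; ring
  rw [this, pd_mul h h]; ring

lemma pd_log {g : EuclideanSpace ℝ (Fin n) → ℝ} {x : EuclideanSpace ℝ (Fin n)}
    (h : DifferentiableAt ℝ g x) (hgx : g x ≠ 0) (i : Fin n) :
    pd (fun y => Real.log (g y)) i x = (g x)⁻¹ * pd g i x := by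
  unfold pd; rw [(h.hasFDerivAt.log hgx).fderiv]; simp

lemma pd_neg {g : EuclideanSpace ℝ (Fin n) → ℝ} {x : EuclideanSpace ℝ (Fin n)} (i : Fin n) :
    pd (fun y => -(g y)) i x = -pd g i x := by
  unfold pd; rw [fderiv_fun_neg]; simp

lemma pd_add {g₁ g₂ : EuclideanSpace ℝ (Fin n) → ℝ} {x : EuclideanSpace ℝ (Fin n)}
    (h₁ : DifferentiableAt ℝ g₁ x) (h₂ : DifferentiableAt ℝ g₂ x) (i : Fin n) :
    pd (fun y => g₁ y + g₂ y) i x = pd g₁ i x + pd g₂ i x := by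
  unfold pd; rw [fderiv_fun_add h₁ h₂]; simp

lemma pd_symm (g : EuclideanSpace ℝ (Fin n) → ℝ) (x : EuclideanSpace ℝ (Fin n))
    (hg : ContDiffAt ℝ 2 g x) (i j : Fin n) :
    pd (pd g j) i x = pd (pd g i) j x := by
  have hd : DifferentiableAt ℝ (fderiv ℝ g) x :=
    (hg.fderiv_right (le_refl 2)).differentiableAt one_ne_zero
  have key : ∀ z : EuclideanSpace ℝ (Fin n), fderiv ℝ (fun y => fderiv ℝ g y z) x =
      (fderiv ℝ (fderiv ℝ g) x).flip z := by
    intro z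
    have := fderiv_clm_apply (c := fderiv ℝ g) (u := fun _ => z) hd (differentiableAt_const z)
    simpa using this
  have hsymm : IsSymmSndFDerivAt ℝ g x := hg.isSymmSndFDerivAt (by simp)
  show fderiv ℝ (fun y => fderiv ℝ g y (EuclideanSpace.single j 1)) x (EuclideanSpace.single i 1)
      = fderiv ℝ (fun y => fderiv ℝ g y (EuclideanSpace.single i 1)) x (EuclideanSpace.single j 1)
  rw [key, key]
  simpa using hsymm (EuclideanSpace.single i 1) (EuclideanSpace.single j 1)

end FI

open FI

set_option maxHeartbeats 1000000 in
/-- **Lemma 4.1 (Euclidean case).** Let `u > 0` be a `C³` solution of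
`Δu + |∇u|^q u^p = 0` on an open set `Ω ⊆ ℝⁿ`, `l = p + q − 1`, and on the regular set
let `H = |∇ln u|²`, `L = |∇ln u|^q u^l`, `Z = L/H`.  Then for every `β ∈ ℝ` and every
function `σ`, at each regular point,
`ΔH = A(β)H² + A(σ)L² + B(β,σ)HL + (2(β−1)H + (2σ−q)L)⟨∇ln u, ∇ln H⟩
      + 2‖T(β,σ) − (tr T(β,σ)/n)·I‖²`,
where `A(x) = (2/n)(1+x)² − 2x²`, `B(x,y) = (4/n)(1+x)(1+y) − 4xy − 2l` and
`T(β,σ) = u⁻¹∇²u − ((1+β) + σZ)·∇ln u ⊗ ∇ln u`. -/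
theorem fundamental_identity (n : ℕ) (hn : 1 ≤ n)
    (Ω : Set (EuclideanSpace ℝ (Fin n))) (hΩ : IsOpen Ω)
    (p q : ℝ) (hq : 0 ≤ q)
    (u : EuclideanSpace ℝ (Fin n) → ℝ)
    (hu : ContDiffOn ℝ 3 u Ω)
    (hpos : ∀ x ∈ Ω, 0 < u x)
    (heq : ∀ x ∈ Ω, elaplacian u x + ‖gradient u x‖ ^ q * u x ^ p = 0)
    (β : ℝ) (σ : EuclideanSpace ℝ (Fin n) → ℝ)
    (l : ℝ) (hl : l = p + q - 1)
    (H L : EuclideanSpace ℝ (Fin n) → ℝ)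
    (hH : H = fun y => ‖(u y)⁻¹ • gradient u y‖ ^ 2)
    (hL : L = fun y => ‖(u y)⁻¹ • gradient u y‖ ^ q * u y ^ l)
    (T : EuclideanSpace ℝ (Fin n) → Matrix (Fin n) (Fin n) ℝ)
    (hT : ∀ x, T x = fun i j =>
      (u x)⁻¹ * ehessian u x i j
        - ((1 + β) + σ x * (L x / H x)) *
            (((u x)⁻¹ • gradient u x) i * ((u x)⁻¹ • gradient u x) j)) :
    ∀ x ∈ Ω, gradient u x ≠ 0 →
      elaplacian H x =
        ((2 / (n : ℝ)) * (1 + β) ^ 2 - 2 * β ^ 2) * H x ^ 2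
        + ((2 / (n : ℝ)) * (1 + σ x) ^ 2 - 2 * (σ x) ^ 2) * L x ^ 2
        + ((4 / (n : ℝ)) * (1 + β) * (1 + σ x) - 4 * β * σ x - 2 * l) * H x * L x
        + (2 * (β - 1) * H x + (2 * σ x - q) * L x) *
            ⟪(u x)⁻¹ • gradient u x, (H x)⁻¹ • gradient H x⟫
        + 2 * ∑ i : Fin n, ∑ j : Fin n,
            (T x i j - (Matrix.trace (T x) / (n : ℝ)) * (if i = j then (1 : ℝ) else 0)) ^ 2 := by
  intro x hx hgx
  classical
  have hux : 0 < u x := hpos x hx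
  have hune : ∀ y ∈ Ω, u y ≠ 0 := fun y hy => (hpos y hy).ne'
  have hu3 : ∀ y ∈ Ω, ContDiffAt ℝ 3 u y := fun y hy => (hu y hy).contDiffAt (hΩ.mem_nhds hy)
  have hudiff : ∀ y ∈ Ω, DifferentiableAt ℝ u y :=
    fun y hy => (hu3 y hy).differentiableAt (by norm_num)
  set f : EuclideanSpace ℝ (Fin n) → ℝ := fun y => Real.log (u y) with hfdef
  have hf3 : ∀ y ∈ Ω, ContDiffAt ℝ 3 f y := fun y hy => (hu3 y hy).log (hune y hy)
  have hDf : ∀ y ∈ Ω, ∀ j, pd f j y = (u y)⁻¹ * pd u j y :=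
    fun y hy j => pd_log (hudiff y hy) (hune y hy) j
  have hw : ∀ y : EuclideanSpace ℝ (Fin n), ∀ i, ((u y)⁻¹ • gradient u y) i = (u y)⁻¹ * pd u i y := by
    intro y i
    simp [grad_coord]
  have hHval : ∀ y ∈ Ω, H y = ∑ j, (pd f j y) ^ 2 := by
    intro y hy
    rw [hH]
    simp only
    rw [norm_sq_coord]
    exact Finset.sum_congr rfl fun j _ => by rw [hw y j, hDf y hy j]
  -- smoothness pool
  have hf2 : ∀ y ∈ Ω, ∀ j, ContDiffAt ℝ 2 (pd f j) y := by
    intro y hy j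
    exact pd_contDiffAt (hf3 y hy) (by norm_num) j
  have hDfdiff : ∀ y ∈ Ω, ∀ j, DifferentiableAt ℝ (pd f j) y :=
    fun y hy j => (hf2 y hy j).differentiableAt two_ne_zero
  have hDDfdiff : ∀ y ∈ Ω, ∀ i j, DifferentiableAt ℝ (pd (pd f j) i) y := by
    intro y hy i j
    exact (pd_contDiffAt (m := 1) (hf2 y hy j) (by norm_num) i).differentiableAt one_ne_zero
  have hDudiff : ∀ y ∈ Ω, ∀ i, DifferentiableAt ℝ (pd u i) y := by
    intro y hy i
    exact (pd_contDiffAt (hu3 y hy) (by norm_num : (1:WithTop ℕ∞) + 1 ≤ 3) i).differentiableAt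
      one_ne_zero
  -- first derivative of H
  have hDH : ∀ y ∈ Ω, ∀ i, pd H i y = ∑ j, 2 * pd f j y * pd (pd f j) i y := by
    intro y hy i
    rw [pd_congr hΩ hy hHval i]
    rw [pd_sum Finset.univ (fun j y => pd f j y ^ 2) (fun j _ => (hDfdiff y hy j).pow 2) i]
    exact Finset.sum_congr rfl fun j _ => pd_sq (hDfdiff y hy j) i
  have hHdiff : ∀ y ∈ Ω, DifferentiableAt ℝ H y := by
    intro y hy
    have hev : H =ᶠ[nhds y] fun z => ∑ j, (pd f j z) ^ 2 :=
      Filter.eventuallyEq_of_mem (hΩ.mem_nhds hy) hHval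
    rw [hev.differentiableAt_iff]
    exact DifferentiableAt.fun_sum fun j _ => (hDfdiff y hy j).pow 2
  -- Laplacian of H, expanded
  have hlapH : elaplacian H x = ∑ i, ∑ j,
      (2 * (pd (pd f j) i x) ^ 2 + 2 * pd f j x * pd (pd (pd f j) i) i x) := by
    have h0 : elaplacian H x = ∑ i : Fin n, pd (pd H i) i x := rfl
    rw [h0]
    refine Finset.sum_congr rfl fun i _ => ?_
    rw [pd_congr hΩ hx (fun y hy => hDH y hy i) i]
    rw [pd_sum Finset.univ (fun j y => 2 * pd f j y * pd (pd f j) i y)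
      (fun j _ => ((hDfdiff x hx j).const_mul 2).mul (hDDfdiff x hx i j)) i]
    refine Finset.sum_congr rfl fun j _ => ?_
    rw [pd_mul ((hDfdiff x hx j).const_mul 2) (hDDfdiff x hx i j) i,
      pd_const_mul 2 (hDfdiff x hx j) i]
    ring
  -- symmetry of second derivatives of f
  have hsymm2 : ∀ y ∈ Ω, ∀ i j, pd (pd f j) i y = pd (pd f i) j y :=
    fun y hy i j => pd_symm f y ((hf3 y hy).of_le (by norm_num)) i j
  set Lapf : EuclideanSpace ℝ (Fin n) → ℝ := fun y => ∑ i, pd (pd f i) i y with hLapfdef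
  have hT3 : ∀ j, ∑ i, pd (pd (pd f j) i) i x = pd Lapf j x := by
    intro j
    have step : ∀ i, pd (pd (pd f j) i) i x = pd (pd (pd f i) i) j x := by
      intro i
      rw [pd_congr hΩ hx (fun y hy => hsymm2 y hy i j) i]
      exact pd_symm (pd f i) x (hf2 x hx i) i j
    rw [Finset.sum_congr rfl fun i _ => step i]
    exact (pd_sum Finset.univ (fun i => pd (pd f i) i) (fun i _ => hDDfdiff x hx i i) j).symm
  -- value of L in terms of u and its gradient
  have hw_norm : ∀ y ∈ Ω, (u y)⁻¹ * (‖gradient u y‖ ^ q * u y ^ p) = L y := by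
    intro y hy
    rw [hL]
    simp only
    have h1 : ‖(u y)⁻¹ • gradient u y‖ = (u y)⁻¹ * ‖gradient u y‖ := by
      rw [norm_smul, Real.norm_eq_abs, abs_inv, abs_of_pos (hpos y hy)]
    rw [h1, Real.mul_rpow (inv_pos.mpr (hpos y hy)).le (norm_nonneg _)]
    have h2 : u y ^ l = u y ^ q * (u y ^ p * (u y)⁻¹) := by
      have hexp : l = q + (p + (-1)) := by rw [hl]; ring
      rw [hexp, Real.rpow_add (hpos y hy), Real.rpow_add (hpos y hy), Real.rpow_neg_one]
    rw [h2, Real.inv_rpow (hpos y hy).le]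
    have h3 : u y ^ q ≠ 0 := (Real.rpow_pos_of_pos (hpos y hy) q).ne'
    have h4 : u y ≠ 0 := hune y hy
    field_simp
  -- the PDE satisfied by f = log u
  have hLapfval : ∀ y ∈ Ω, Lapf y = -(L y + H y) := by
    intro y hy
    have hstep : ∀ i, pd (pd f i) i y
        = (u y)⁻¹ * pd (pd u i) i y + pd u i y * (-((u y) ^ 2)⁻¹ * pd u i y) := by
      intro i
      rw [pd_congr hΩ hy (fun z hz => hDf z hz i) i]
      rw [pd_mul (g₁ := fun z => (u z)⁻¹) ((hudiff y hy).inv (hune y hy)) (hDudiff y hy i) i]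
      rw [pd_inv (hudiff y hy) (hune y hy) i]
    have e1 : Lapf y = (u y)⁻¹ * elaplacian u y - ∑ i, (pd f i y) ^ 2 := by
      have h0 : elaplacian u y = ∑ i : Fin n, pd (pd u i) i y := rfl
      have h1 : Lapf y = ∑ i, pd (pd f i) i y := rfl
      rw [h1, h0, Finset.mul_sum, ← Finset.sum_sub_distrib]
      refine Finset.sum_congr rfl fun i _ => ?_
      rw [hstep i, hDf y hy i]
      have h4 : u y ≠ 0 := hune y hy
      field_simp
      ring
    have e2 : elaplacian u y = -(‖gradient u y‖ ^ q * u y ^ p) := by linarith [heq y hy]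
    rw [e1, e2, ← hHval y hy, mul_neg, hw_norm y hy]
    ring
  -- positivity of H at x
  have hHx_pos : 0 < H x := by
    have hwne : (u x)⁻¹ • gradient u x ≠ 0 := smul_ne_zero (inv_ne_zero (hune x hx)) hgx
    rw [hH]
    simp only
    exact pow_pos (norm_pos_iff.mpr hwne) 2
  -- L as a function of H and u
  have hLfun : L = fun y => H y ^ (q / 2) * u y ^ l := by
    funext y
    rw [hL, hH]
    simp only
    congr 1
    rw [← Real.rpow_natCast ‖(u y)⁻¹ • gradient u y‖ 2, ← Real.rpow_mul (norm_nonneg _)]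
    congr 1
    push_cast
    ring
  have hHdiffx : DifferentiableAt ℝ H x := hHdiff x hx
  have hA : DifferentiableAt ℝ (fun y => H y ^ (q / 2)) x :=
    hHdiffx.rpow_const (Or.inl hHx_pos.ne')
  have hB : DifferentiableAt ℝ (fun y => u y ^ l) x :=
    (hudiff x hx).rpow_const (Or.inl (hune x hx))
  have hLdiffx : DifferentiableAt ℝ L x := by rw [hLfun]; exact hA.mul hB
  have hDL : ∀ j, pd L j x
      = H x ^ (q / 2) * (l * u x ^ (l - 1) * pd u j x)
        + u x ^ l * (q / 2 * H x ^ (q / 2 - 1) * pd H j x) := by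
    intro j
    rw [hLfun]
    rw [pd_mul hA hB j, pd_rpow_const (hudiff x hx) (hune x hx) l j,
      pd_rpow_const hHdiffx hHx_pos.ne' (q / 2) j]
  -- derivative of Lapf at x
  have hDLapf : ∀ j, pd Lapf j x = -(pd L j x + pd H j x) := by
    intro j
    rw [pd_congr hΩ hx hLapfval j]
    rw [pd_neg (g := fun y => L y + H y), pd_add hLdiffx hHdiffx]
  -- basic value identities at x
  have hFu : ∀ j, pd u j x = u x * pd f j x := by
    intro j; rw [hDf x hx j]; field_simp
  have hHxval : H x = ∑ j, (pd f j x) ^ 2 := hHval x hx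
  have hsum_fu : ∑ j, pd f j x * pd u j x = u x * H x := by
    rw [hHxval, Finset.mul_sum]
    exact Finset.sum_congr rfl fun j _ => by rw [hFu j]; ring
  have hinner : ⟪(u x)⁻¹ • gradient u x, (H x)⁻¹ • gradient H x⟫
      = (H x)⁻¹ * ∑ j, pd f j x * pd H j x := by
    rw [PiLp.inner_apply, Finset.mul_sum]
    refine Finset.sum_congr rfl fun j _ => ?_
    have c1 : ((u x)⁻¹ • gradient u x) j = pd f j x := by
      rw [hw x j, ← hDf x hx j]
    have c2 : ((H x)⁻¹ • gradient H x) j = (H x)⁻¹ * pd H j x := by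
      simp [grad_coord]
    rw [c1, c2]
    simp
    ring
  -- entries of T
  have hTentry : ∀ i j, T x i j = pd (pd f j) i x
      - (β + σ x * (L x / H x)) * (pd f i x * pd f j x) := by
    intro i j
    rw [hT x]
    simp only
    have hhess : (u x)⁻¹ * ehessian u x i j = pd (pd f j) i x + pd f i x * pd f j x := by
      have h0 : ehessian u x i j = pd (pd u j) i x := rfl
      have h1 : pd (pd f j) i x = (u x)⁻¹ * pd (pd u j) i x
          + pd u j x * (-((u x) ^ 2)⁻¹ * pd u i x) := by
        rw [pd_congr hΩ hx (fun y hy => hDf y hy j) i]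
        rw [pd_mul (g₁ := fun z => (u z)⁻¹) ((hudiff x hx).inv (hune x hx)) (hDudiff x hx j) i]
        rw [pd_inv (hudiff x hx) (hune x hx) i]
      rw [h0, h1, hFu i, hFu j]
      have h4 : u x ≠ 0 := hune x hx
      field_simp
      ring
    rw [hhess, hw x i, hw x j, ← hDf x hx i, ← hDf x hx j]
    ring
  -- trace of T
  have htrace : Matrix.trace (T x) = -(L x + H x) - (β + σ x * (L x / H x)) * H x := by
    have h0 : Matrix.trace (T x) = ∑ i, T x i i := rfl
    rw [h0, Finset.sum_congr rfl fun i _ => hTentry i i, Finset.sum_sub_distrib]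
    have h1 : (∑ i, pd (pd f i) i x) = -(L x + H x) := hLapfval x hx
    rw [h1]
    have h2 : ∑ i, (β + σ x * (L x / H x)) * (pd f i x * pd f i x)
        = (β + σ x * (L x / H x)) * H x := by
      rw [← Finset.mul_sum, hHxval]
      congr 1
      exact Finset.sum_congr rfl fun i _ => by ring
    rw [h2]
  -- relation between W and Q
  have hDHx : ∀ i, pd H i x = ∑ j, 2 * pd f j x * pd (pd f j) i x := hDH x hx
  have hWQ : ∑ j, pd f j x * pd H j x
      = 2 * ∑ i, ∑ j, pd (pd f j) i x * pd f i x * pd f j x := by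
    rw [Finset.mul_sum]
    refine Finset.sum_congr rfl fun i _ => ?_
    rw [hDHx i, Finset.mul_sum, Finset.mul_sum]
    exact Finset.sum_congr rfl fun j _ => by ring
  have hFF : ∑ i, ∑ j, (pd f i x * pd f j x) ^ 2 = (H x) ^ 2 := by
    rw [hHxval, sq, Finset.sum_mul_sum]
    exact Finset.sum_congr rfl fun i _ => Finset.sum_congr rfl fun j _ => by ring
  -- expansion of the sum of squares
  have hsqsum : ∑ i : Fin n, ∑ j : Fin n,
      (T x i j - Matrix.trace (T x) / (n:ℝ) * (if i = j then (1:ℝ) else 0)) ^ 2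
      = (∑ i, ∑ j, (pd (pd f j) i x) ^ 2)
        - (2 * (β + σ x * (L x / H x)))
            * (∑ i, ∑ j, pd (pd f j) i x * pd f i x * pd f j x)
        + (β + σ x * (L x / H x)) ^ 2 * (H x) ^ 2
        + ((-2 * (Matrix.trace (T x) / (n:ℝ))) * (-(L x + H x))
          + (2 * (Matrix.trace (T x) / (n:ℝ)) * (β + σ x * (L x / H x))) * H x
          + (n:ℝ) * (Matrix.trace (T x) / (n:ℝ)) ^ 2) := by
    have expand : ∀ i j : Fin n,
        (T x i j - Matrix.trace (T x) / (n:ℝ) * (if i = j then (1:ℝ) else 0)) ^ 2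
        = ((pd (pd f j) i x) ^ 2
            - (2 * (β + σ x * (L x / H x)))
              * (pd (pd f j) i x * pd f i x * pd f j x)
            + (β + σ x * (L x / H x)) ^ 2 * (pd f i x * pd f j x) ^ 2)
          + (if i = j then
              (-2 * (Matrix.trace (T x) / (n:ℝ))) * pd (pd f j) i x
              + (2 * (Matrix.trace (T x) / (n:ℝ)) * (β + σ x * (L x / H x)))
                  * (pd f i x * pd f j x)
              + (Matrix.trace (T x) / (n:ℝ)) ^ 2
            else 0) := by
      intro i j
      rw [hTentry i j]
      by_cases hij : i = j
      · rw [if_pos hij, if_pos hij]; ring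
      · rw [if_neg hij, if_neg hij]; ring
    rw [Finset.sum_congr rfl fun i _ => Finset.sum_congr rfl fun j _ => expand i j]
    have inner : ∀ i : Fin n, ∑ j, (((pd (pd f j) i x) ^ 2
            - (2 * (β + σ x * (L x / H x)))
              * (pd (pd f j) i x * pd f i x * pd f j x)
            + (β + σ x * (L x / H x)) ^ 2 * (pd f i x * pd f j x) ^ 2)
          + (if i = j then
              (-2 * (Matrix.trace (T x) / (n:ℝ))) * pd (pd f j) i x
              + (2 * (Matrix.trace (T x) / (n:ℝ)) * (β + σ x * (L x / H x)))
                  * (pd f i x * pd f j x)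
              + (Matrix.trace (T x) / (n:ℝ)) ^ 2
            else 0))
        = (∑ j, ((pd (pd f j) i x) ^ 2
            - (2 * (β + σ x * (L x / H x)))
              * (pd (pd f j) i x * pd f i x * pd f j x)
            + (β + σ x * (L x / H x)) ^ 2 * (pd f i x * pd f j x) ^ 2))
          + ((-2 * (Matrix.trace (T x) / (n:ℝ))) * pd (pd f i) i x
              + (2 * (Matrix.trace (T x) / (n:ℝ)) * (β + σ x * (L x / H x)))
                  * (pd f i x * pd f i x)
              + (Matrix.trace (T x) / (n:ℝ)) ^ 2) := by
      intro i
      rw [Finset.sum_add_distrib]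
      congr 1
      rw [Finset.sum_ite_eq Finset.univ i]
      simp
    rw [Finset.sum_congr rfl fun i _ => inner i, Finset.sum_add_distrib]
    have hLapx : (∑ i, pd (pd f i) i x) = -(L x + H x) := hLapfval x hx
    have hHxval' : (∑ j, pd f j x * pd f j x) = H x := by
      rw [hHxval]; exact Finset.sum_congr rfl fun j _ => by ring
    congr 1
    · -- the quadratic part
      simp only [Finset.sum_sub_distrib, Finset.sum_add_distrib, ← Finset.mul_sum]
      rw [hFF]
    · -- the diagonal part
      simp only [Finset.sum_add_distrib, ← Finset.mul_sum, Finset.sum_const,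
        Finset.card_univ, Fintype.card_fin, nsmul_eq_mul]
      rw [hLapx, hHxval']
  -- Laplacian of H in closed form
  have hlap2 : elaplacian H x
      = 2 * (∑ i, ∑ j, (pd (pd f j) i x) ^ 2)
        + ∑ j, 2 * pd f j x * (-(pd L j x + pd H j x)) := by
    rw [hlapH]
    simp only [Finset.sum_add_distrib]
    congr 1
    · rw [Finset.mul_sum]
      exact Finset.sum_congr rfl fun i _ => by rw [Finset.mul_sum]
    · rw [Finset.sum_comm]
      refine Finset.sum_congr rfl fun j _ => ?_
      rw [← Finset.mul_sum, hT3 j, hDLapf j]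
  have hlap3 : elaplacian H x
      = 2 * (∑ i, ∑ j, (pd (pd f j) i x) ^ 2)
        - 2 * (∑ j, pd f j x * pd L j x) - 2 * (∑ j, pd f j x * pd H j x) := by
    have hsplit : ∑ j, 2 * pd f j x * (-(pd L j x + pd H j x))
        = (-2) * (∑ j, pd f j x * pd L j x) + (-2) * (∑ j, pd f j x * pd H j x) := by
      rw [Finset.sum_congr rfl fun j (_ : j ∈ Finset.univ) =>
        show 2 * pd f j x * (-(pd L j x + pd H j x))
          = (-2) * (pd f j x * pd L j x) + (-2) * (pd f j x * pd H j x) from by ring]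
      rw [Finset.sum_add_distrib, ← Finset.mul_sum, ← Finset.mul_sum]
    rw [hlap2, hsplit]
    ring
  -- the term ∑ fⱼ ∂ⱼL
  have r1 : H x ^ (q / 2) * u x ^ l = L x := by
    rw [hLfun]
  have r2 : u x ^ (l - 1) * u x = u x ^ l := by
    rw [Real.rpow_sub hux, Real.rpow_one]
    field_simp
  have r3 : H x ^ (q / 2 - 1) * H x = H x ^ (q / 2) := by
    rw [Real.rpow_sub hHx_pos, Real.rpow_one]
    field_simp
  have r4 : H x ^ (q / 2 - 1) * u x ^ l = L x / H x := by
    rw [← r1, ← r3]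
    field_simp
  have hsumDL : ∑ j, pd f j x * pd L j x
      = l * (L x * H x) + q / 2 * (L x / H x) * (∑ j, pd f j x * pd H j x) := by
    calc ∑ j, pd f j x * pd L j x
        = ∑ j, (H x ^ (q / 2) * (l * u x ^ (l - 1)) * (pd f j x * pd u j x)
            + u x ^ l * (q / 2 * H x ^ (q / 2 - 1)) * (pd f j x * pd H j x)) := by
          refine Finset.sum_congr rfl fun j _ => ?_
          rw [hDL j]; ring
      _ = H x ^ (q / 2) * (l * u x ^ (l - 1)) * (u x * H x)
            + u x ^ l * (q / 2 * H x ^ (q / 2 - 1)) * (∑ j, pd f j x * pd H j x) := by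
          rw [Finset.sum_add_distrib, ← Finset.mul_sum, ← Finset.mul_sum, hsum_fu]
      _ = l * ((H x ^ (q / 2) * (u x ^ (l - 1) * u x)) * H x)
            + q / 2 * (H x ^ (q / 2 - 1) * u x ^ l) * (∑ j, pd f j x * pd H j x) := by
          ring
      _ = l * (L x * H x) + q / 2 * (L x / H x) * (∑ j, pd f j x * pd H j x) := by
          rw [r2, r1, r4]
  -- final algebraic verification
  have hn0 : (n:ℝ) ≠ 0 := Nat.cast_ne_zero.mpr (by omega)
  have hH0 : H x ≠ 0 := hHx_pos.ne'
  rw [hinner, hsqsum, htrace, hlap3, hsumDL, hWQ]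
  field_simp
  ring
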